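/- For w ∈ E₉ and t ∈ ℤ with ⟨w,w⟩ = 2t, the isometry ι_w defined by ι_w(v) = v + ⟨v,k₉⟩·w − (⟨w,v⟩ + t·⟨v,k₉⟩)·k₉ is the identity map of ℤ^{1,9} if and only if w is an integer multiple of k₉. Consequently ι induces an injective map from the quotient group E₉/ℤk₉ into the group of isometries of ℤ^{1,9}. -/
import Mathlib

def B {n : ℕ} (x y : Fin (n + 1) → ℤ) : ℤ :=
  x 0 * y 0 - ∑ i : Fin n, x i.succ * y i.succ

def kv (n : ℕ) : Fin (n + 1) → ℤ := fun j => if j = 0 then -3 else 1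

def iota (w : Fin 10 → ℤ) (t : ℤ) (v : Fin 10 → ℤ) : Fin 10 → ℤ :=
  v + B v (kv 9) • w - (B w v + t * B v (kv 9)) • kv 9

def v₁ : Fin 10 → ℤ := fun j => if j = 1 then -1 else 0

lemma Bv₁ : B v₁ (kv 9) = 1 := by decide

lemma B_comm {n : ℕ} (x y : Fin (n+1) → ℤ) : B x y = B y x := by
  simp [B, mul_comm]

lemma B_smul_left {n : ℕ} (a : ℤ) (x y : Fin (n+1) → ℤ) :
    B (a • x) y = a * B x y := by
  simp [B, Finset.mul_sum, mul_sub, mul_assoc]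

lemma Bkk : B (kv 9) (kv 9) = 0 := by decide

/-- `ι_w` is the identity iff `w ∈ ℤk₉`; consequently `ι` is injective
on `E₉/ℤk₉`. -/
theorem iota_eq_id_iff_multiple_of_k :
    (∀ w : Fin 10 → ℤ, B w (kv 9) = 0 → ∀ t : ℤ, B w w = 2 * t →
      ((∀ v : Fin 10 → ℤ, iota w t v = v) ↔ ∃ c : ℤ, w = c • kv 9)) ∧
    (∀ w w' : Fin 10 → ℤ, B w (kv 9) = 0 → B w' (kv 9) = 0 →
      ∀ t t' : ℤ, B w w = 2 * t → B w' w' = 2 * t' →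
      (∀ v : Fin 10 → ℤ, iota w t v = iota w' t' v) →
      ∃ c : ℤ, w - w' = c • kv 9) := by
  constructor
  · intro w hw t ht
    constructor
    · intro h
      refine ⟨B w v₁ + t, ?_⟩
      have h1 := h v₁
      rw [iota, Bv₁] at h1
      funext j
      have := congrFun h1 j
      simp only [Pi.add_apply, Pi.sub_apply, Pi.smul_apply, smul_eq_mul] at this ⊢
      linarith
    · rintro ⟨c, rfl⟩ v
      have ht0 : t = 0 := by
        rw [B_smul_left, B_comm, B_smul_left, Bkk] at ht
        omega
      rw [iota, ht0, B_smul_left, B_comm (kv 9) v]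
      funext j
      simp only [Pi.add_apply, Pi.sub_apply, Pi.smul_apply, smul_eq_mul]
      ring
  · intro w w' hw hw' t t' ht ht' h
    refine ⟨(B w v₁ + t) - (B w' v₁ + t'), ?_⟩
    have h1 := h v₁
    rw [iota, iota, Bv₁] at h1
    funext j
    have := congrFun h1 j
    simp only [Pi.add_apply, Pi.sub_apply, Pi.smul_apply, smul_eq_mul] at this ⊢
    linarith
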